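/- The limit as n → ∞ of (1/n)·∑_{k=1}^{n} |μ(k)| equals 6/π². -/

import Mathlib

open Nat ArithmeticFunction Finset Filter Real
open scoped ArithmeticFunction.Moebius ArithmeticFunction.zeta

private lemma sum_div_moebius' (b : ℕ) : (∑ d ∈ b.divisors, μ d) = if b = 1 then 1 else 0 := by
  have := congrArg (fun f => f b) moebius_mul_coe_zeta
  simp only [coe_mul_zeta_apply] at this
  rw [this, ArithmeticFunction.one_apply]

private lemma filter_sq_dvd' {k n : ℕ} (hk : 0 < k) (hkn : k ≤ n) {a b : ℕ} (ha : 0 < a)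
    (hb : 0 < b) (hab : b ^ 2 * a = k) (hsq : Squarefree a) :
    (Finset.Icc 1 n).filter (fun d => d ^ 2 ∣ k) = b.divisors := by
  ext d
  simp only [Finset.mem_filter, Finset.mem_Icc, Nat.mem_divisors]
  constructor
  · rintro ⟨⟨h1, h2⟩, hd⟩
    have hd0 : d ≠ 0 := by omega
    refine ⟨?_, hb.ne'⟩
    rw [← Nat.factorization_le_iff_dvd hd0 hb.ne']
    intro p
    have hdk : (d ^ 2).factorization p ≤ k.factorization p :=
      (Nat.factorization_le_iff_dvd (pow_ne_zero _ hd0) hk.ne').2 hd p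
    rw [← hab, Nat.factorization_mul (pow_ne_zero _ hb.ne') ha.ne',
      Nat.factorization_pow, Nat.factorization_pow] at hdk
    have := hsq.natFactorization_le_one p
    simp only [Finsupp.coe_add, Finsupp.coe_smul, Pi.add_apply, Pi.smul_apply,
      smul_eq_mul] at hdk
    omega
  · rintro ⟨hd, -⟩
    have hdk : d ^ 2 ∣ k := by
      rw [← hab]; exact Dvd.dvd.mul_right (pow_dvd_pow_of_dvd hd 2) a
    refine ⟨⟨Nat.one_le_iff_ne_zero.2 ?_, ?_⟩, hdk⟩
    · rintro rfl; exact hb.ne' (Nat.eq_zero_of_zero_dvd hd)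
    · calc d ≤ d ^ 2 := Nat.le_self_pow two_ne_zero d
        _ ≤ k := Nat.le_of_dvd hk hdk
        _ ≤ n := hkn

private lemma per_k' {k n : ℕ} (hk : 0 < k) (hkn : k ≤ n) :
    |(μ k : ℤ)| = ∑ d ∈ (Finset.Icc 1 n).filter (fun d => d ^ 2 ∣ k), μ d := by
  obtain ⟨a, b, ha, hb, hab, hsq⟩ := Nat.sq_mul_squarefree_of_pos hk
  rw [filter_sq_dvd' hk hkn ha hb hab hsq, sum_div_moebius']
  by_cases h : Squarefree k
  · have hb1 : b = 1 := by
      have : b * b ∣ k := by rw [← hab]; ring_nf; exact Dvd.intro a rfl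
      exact Nat.isUnit_iff.1 (h b this)
    rw [if_pos hb1, abs_moebius_eq_one_of_squarefree h]
  · have hb1 : b ≠ 1 := by
      rintro rfl; rw [one_pow, one_mul] at hab; exact h (hab ▸ hsq)
    rw [if_neg hb1, moebius_eq_zero_of_not_squarefree h, abs_zero]

private lemma card_sq_dvd' (n d : ℕ) :
    ((Finset.Icc 1 n).filter (fun k => d ^ 2 ∣ k)).card = n / d ^ 2 := by
  have h : Finset.Icc 1 n = Finset.Ioc 0 n := by rw [← Finset.Icc_add_one_left_eq_Ioc]; rfl
  rw [h]
  exact Nat.Ioc_filter_dvd_card_eq_div n (d ^ 2)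

private lemma count_id' (n : ℕ) :
    ∑ k ∈ Finset.Icc 1 n, |(μ k : ℤ)| = ∑ d ∈ Finset.Icc 1 n, μ d * (n / d ^ 2 : ℕ) := by
  have h1 : ∑ k ∈ Finset.Icc 1 n, |(μ k : ℤ)| =
      ∑ k ∈ Finset.Icc 1 n, ∑ d ∈ (Finset.Icc 1 n).filter (fun d => d ^ 2 ∣ k), μ d :=
    Finset.sum_congr rfl fun k hk => by
      rw [Finset.mem_Icc] at hk; exact per_k' hk.1 hk.2
  rw [h1]
  simp_rw [Finset.sum_filter]
  rw [Finset.sum_comm]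
  refine Finset.sum_congr rfl fun d _ => ?_
  rw [← Finset.sum_filter, Finset.sum_const, ← card_sq_dvd' n d, nsmul_eq_mul, mul_comm]

open LSeries.notation in
private lemma term_zeta' (n : ℕ) :
    LSeries.term (fun n : ℕ => ((ζ n : ℕ) : ℂ)) 2 n = ((1 / (n:ℝ) ^ 2 : ℝ) : ℂ) := by
  rcases eq_or_ne n 0 with rfl | hn
  · simp [LSeries.term]
  · rw [LSeries.term_of_ne_zero hn]
    rw [show (2:ℂ) = ((2:ℕ):ℂ) by norm_num, Complex.cpow_natCast]
    simp [ArithmeticFunction.zeta_apply, hn]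

private lemma LSeries_zeta_two' :
    LSeries (fun n : ℕ => ((ζ n : ℕ) : ℂ)) 2 = ((π ^ 2 / 6 : ℝ) : ℂ) := by
  unfold LSeries
  rw [funext term_zeta']
  exact (Complex.ofRealCLM.hasSum hasSum_zeta_two).tsum_eq

open LSeries.notation in
private lemma term_mu' (n : ℕ) :
    LSeries.term ↗μ 2 n = (((μ n : ℝ) / (n:ℝ) ^ 2 : ℝ) : ℂ) := by
  rcases eq_or_ne n 0 with rfl | hn
  · simp [LSeries.term]
  · rw [LSeries.term_of_ne_zero hn]
    rw [show (2:ℂ) = ((2:ℕ):ℂ) by norm_num, Complex.cpow_natCast]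
    push_cast
    ring

private lemma summable_mu' : Summable (fun d : ℕ => (μ d : ℝ) / d ^ 2) := by
  apply Summable.of_norm
  apply Summable.of_nonneg_of_le (fun d => norm_nonneg _) (fun d => ?_)
    (Real.summable_one_div_nat_pow.2 one_lt_two)
  rcases eq_or_ne d 0 with rfl | hd
  · simp
  rw [Real.norm_eq_abs, abs_div, abs_pow, Nat.abs_cast, div_le_div_iff_of_pos_right]
  · have := ArithmeticFunction.abs_moebius_le_one (n := d)
    calc |((μ d : ℤ) : ℝ)| = ((|μ d| : ℤ) : ℝ) := by push_cast; ring
      _ ≤ 1 := by exact_mod_cast this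
  · positivity

open LSeries.notation in
private lemma LSeries_mu_two' :
    LSeries ↗μ 2 = ((∑' d : ℕ, (μ d : ℝ) / d ^ 2 : ℝ) : ℂ) := by
  unfold LSeries
  rw [funext term_mu']
  exact (Complex.ofRealCLM.hasSum summable_mu'.hasSum).tsum_eq

private lemma tsum_mu' : HasSum (fun d : ℕ => (μ d : ℝ) / d ^ 2) (6 / π ^ 2) := by
  have key := LSeries_zeta_mul_Lseries_moebius (s := 2) (by norm_num)
  rw [LSeries_zeta_two', LSeries_mu_two', ← Complex.ofReal_mul, ← Complex.ofReal_one] at key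
  have := Complex.ofReal_injective key
  have hπ : (π : ℝ) ^ 2 / 6 ≠ 0 := by positivity
  have hS : (∑' d : ℕ, (μ d : ℝ) / d ^ 2) = 6 / π ^ 2 := by
    field_simp at this ⊢
    linarith [this]
  exact hS ▸ summable_mu'.hasSum

private lemma term_bound_le' {n d : ℕ} (hn : 0 < n) (hd : 0 < d) :
    |((n / d ^ 2 : ℕ) : ℝ) / (n:ℝ) - 1 / (d:ℝ) ^ 2| ≤ (1 : ℝ) / (n:ℝ) := by
  have hd2 : 0 < d ^ 2 := by positivity
  obtain ⟨q, r, hr, hqr⟩ : ∃ q r, r < d ^ 2 ∧ n = q * d ^ 2 + r :=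
    ⟨n / d ^ 2, n % d ^ 2, Nat.mod_lt _ hd2, (Nat.div_add_mod' n (d^2)).symm⟩
  have hq : n / d ^ 2 = q := by
    rw [hqr, Nat.mul_comm q, Nat.mul_add_div hd2, Nat.div_eq_of_lt hr, add_zero]
  rw [hq]
  have hnR : (n : ℝ) = (q:ℝ) * (d:ℝ) ^ 2 + (r:ℝ) := by
    exact_mod_cast congrArg (Nat.cast : ℕ → ℝ) hqr
  have hnpos : (0:ℝ) < (n:ℝ) := by exact_mod_cast hn
  have hd2pos : (0:ℝ) < (d:ℝ) ^ 2 := by positivity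
  have hrR : (r : ℝ) < (d:ℝ) ^ 2 := by exact_mod_cast hr
  have key : ((q:ℝ)) / (n:ℝ) - 1 / (d:ℝ) ^ 2 = -((r:ℝ) / ((n:ℝ) * (d:ℝ) ^ 2)) := by
    field_simp
    nlinarith [hnR]
  rw [key, abs_neg, abs_of_nonneg (by positivity)]
  rw [div_le_div_iff₀ (by positivity) hnpos]
  nlinarith [hrR, hnpos]

theorem squarefree_density :
    Filter.Tendsto
      (fun n : ℕ => (∑ k ∈ Finset.Icc 1 n, |(ArithmeticFunction.moebius k : ℝ)|) / n)
      Filter.atTop (nhds (6 / Real.pi ^ 2)) := by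
  set f : ℕ → ℝ := fun d => (μ d : ℝ) / d ^ 2 with hf
  set T : ℕ → ℝ := fun n => ∑ d ∈ Finset.Icc 1 n, f d with hT
  set A : ℕ → ℝ := fun n => (∑ k ∈ Finset.Icc 1 n, |(μ k : ℝ)|) with hA
  -- counting identity in ℝ
  have hAeq : ∀ n : ℕ, A n = ∑ d ∈ Finset.Icc 1 n, (μ d : ℝ) * ((n / d ^ 2 : ℕ) : ℝ) := by
    intro n
    have := count_id' n
    have : ((∑ k ∈ Finset.Icc 1 n, |(μ k : ℤ)| : ℤ) : ℝ) =
        ((∑ d ∈ Finset.Icc 1 n, μ d * (n / d ^ 2 : ℕ) : ℤ) : ℝ) := by exact_mod_cast this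
    simpa [hA, Int.cast_abs, -Int.natCast_ediv] using this
  -- T tends to the limit
  have hTlim : Tendsto T atTop (nhds (6 / π ^ 2)) := by
    have h0 : ∀ n : ℕ, T n = ∑ d ∈ Finset.range (n + 1), f d := by
      intro n
      refine Finset.sum_subset ?_ ?_
      · intro x hx
        rw [Finset.mem_Icc] at hx
        rw [Finset.mem_range]; omega
      · intro x hx hx'
        rw [Finset.mem_range] at hx
        rw [Finset.mem_Icc] at hx'
        have : x = 0 := by omega
        simp [this, hf]
    have h1 := tsum_mu'.tendsto_sum_nat
    have h2 : Tendsto (fun n : ℕ => ∑ d ∈ Finset.range (n + 1), f d) atTop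
        (nhds (6 / π ^ 2)) := h1.comp (tendsto_add_atTop_nat 1)
    exact h2.congr fun n => (h0 n).symm
  -- error term
  set E : ℕ → ℝ := fun n => A n / n - T n with hE
  have hsqrt_atTop : Tendsto (fun n : ℕ => Nat.sqrt n) atTop atTop := by
    refine tendsto_atTop_atTop.2 fun b => ⟨b * b, fun a ha => ?_⟩
    exact Nat.le_sqrt.2 ha
  have hzeta := hasSum_zeta_two
  have hElim : Tendsto E atTop (nhds 0) := by
    apply squeeze_zero_norm' (a := fun n : ℕ =>
      ((Nat.sqrt n : ℝ)) / n + (π ^ 2 / 6 - ∑ j ∈ Finset.range (Nat.sqrt n + 1), 1 / (j:ℝ) ^ 2))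
    · filter_upwards [eventually_ge_atTop 1] with n hn
      have hnpos : (0:ℝ) < (n:ℝ) := by exact_mod_cast hn
      have hstep : ‖E n‖ ≤ ∑ d ∈ Finset.Icc 1 n,
          (if d * d ≤ n then (1:ℝ) / n else 1 / (d:ℝ) ^ 2) := by
        have hEn : E n = ∑ d ∈ Finset.Icc 1 n,
            ((μ d : ℝ) * (((n / d ^ 2 : ℕ) : ℝ) / n - 1 / (d:ℝ) ^ 2)) := by
          rw [hE]
          simp only [hAeq n, hT, hf, Finset.sum_div, ← Finset.sum_sub_distrib]
          refine Finset.sum_congr rfl fun d _ => ?_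
          ring
        rw [hEn, Real.norm_eq_abs]
        refine (Finset.abs_sum_le_sum_abs _ _).trans (Finset.sum_le_sum fun d hd => ?_)
        rw [Finset.mem_Icc] at hd
        have hd1 : 0 < d := hd.1
        have hmu : |(μ d : ℝ)| ≤ 1 := by
          have := ArithmeticFunction.abs_moebius_le_one (n := d)
          calc |((μ d : ℤ) : ℝ)| = ((|μ d| : ℤ) : ℝ) := by push_cast; ring
            _ ≤ 1 := by exact_mod_cast this
        rw [abs_mul]
        by_cases hcase : d * d ≤ n
        · rw [if_pos hcase]
          calc |(μ d : ℝ)| * |((n / d ^ 2 : ℕ) : ℝ) / n - 1 / (d:ℝ) ^ 2|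
              ≤ 1 * ((1:ℝ) / n) := by
                exact mul_le_mul hmu (term_bound_le' (by omega) hd1) (abs_nonneg _) zero_le_one
            _ = (1:ℝ) / n := one_mul _
        · rw [if_neg hcase]
          have h0 : n / d ^ 2 = 0 := Nat.div_eq_of_lt (by nlinarith [hd.1])
          rw [h0]
          simp only [Nat.cast_zero, zero_div, zero_sub, abs_neg]
          rw [abs_of_nonneg (show (0:ℝ) ≤ 1/(d:ℝ)^2 by positivity)]
          calc |(μ d : ℝ)| * (1 / (d:ℝ) ^ 2) ≤ 1 * (1 / (d:ℝ) ^ 2) :=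
              mul_le_mul_of_nonneg_right hmu (by positivity)
            _ = 1 / (d:ℝ) ^ 2 := one_mul _
      refine hstep.trans ?_
      rw [Finset.sum_ite]
      gcongr
      · -- first piece: card bound
        rw [Finset.sum_const, nsmul_eq_mul]
        have hcard : ((Finset.Icc 1 n).filter (fun d => d * d ≤ n)).card ≤ Nat.sqrt n := by
          have hsub : (Finset.Icc 1 n).filter (fun d => d * d ≤ n) ⊆
              Finset.Icc 1 (Nat.sqrt n) := by
            intro d hd
            simp only [Finset.mem_filter, Finset.mem_Icc] at hd ⊢
            exact ⟨hd.1.1, Nat.le_sqrt.2 hd.2⟩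
          calc _ ≤ (Finset.Icc 1 (Nat.sqrt n)).card := Finset.card_le_card hsub
            _ = Nat.sqrt n := by rw [Nat.card_Icc]; omega
        calc (((Finset.Icc 1 n).filter (fun d => d * d ≤ n)).card : ℝ) * (1 / n)
            ≤ (Nat.sqrt n : ℝ) * (1 / n) := by
              apply mul_le_mul_of_nonneg_right _ (by positivity)
              exact_mod_cast hcard
          _ = (Nat.sqrt n : ℝ) / n := by ring
      · -- second piece: tail bound
        set S := (Finset.Icc 1 n).filter (fun d => ¬ d * d ≤ n) with hS
        have hdisj : Disjoint S (Finset.range (Nat.sqrt n + 1)) := by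
          rw [Finset.disjoint_left]
          intro d hdS hdr
          simp only [hS, Finset.mem_filter, Finset.mem_Icc] at hdS
          rw [Finset.mem_range] at hdr
          exact hdS.2 (Nat.le_sqrt.1 (by omega))
        have hsum : (∑ d ∈ S, 1 / (d:ℝ) ^ 2) + ∑ j ∈ Finset.range (Nat.sqrt n + 1), 1 / (j:ℝ) ^ 2
            = ∑ d ∈ S ∪ Finset.range (Nat.sqrt n + 1), 1 / (d:ℝ) ^ 2 :=
          (Finset.sum_union hdisj).symm
        have hle : ∑ d ∈ S ∪ Finset.range (Nat.sqrt n + 1), 1 / (d:ℝ) ^ 2 ≤ π ^ 2 / 6 := by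
          refine (Summable.sum_le_tsum _ (fun i _ => by positivity) hzeta.summable).trans_eq hzeta.tsum_eq
        linarith
    · -- the bound tends to 0
      have hb1 : Tendsto (fun n : ℕ => (Nat.sqrt n : ℝ) / n) atTop (nhds 0) := by
        apply squeeze_zero' (f := fun n : ℕ => (Nat.sqrt n : ℝ) / n)
          (g := fun n : ℕ => 1 / (Nat.sqrt n : ℝ))
        · filter_upwards [eventually_ge_atTop 0] with n _
          positivity
        · filter_upwards [eventually_ge_atTop 1] with n hn
          have hs1 : 1 ≤ Nat.sqrt n := by
            rw [Nat.le_sqrt]; omega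
          have hspos : (0:ℝ) < (Nat.sqrt n : ℝ) := by exact_mod_cast hs1
          have hnpos : (0:ℝ) < (n:ℝ) := by exact_mod_cast hn
          rw [div_le_div_iff₀ hnpos hspos, one_mul]
          have h := Nat.sqrt_le' n
          rw [pow_two] at h
          exact_mod_cast h
        · exact tendsto_one_div_atTop_nhds_zero_nat.comp hsqrt_atTop
      have hb2 : Tendsto (fun n : ℕ =>
          π ^ 2 / 6 - ∑ j ∈ Finset.range (Nat.sqrt n + 1), 1 / (j:ℝ) ^ 2) atTop (nhds 0) := by
        have hp := hzeta.tendsto_sum_nat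
        have hcomp : Tendsto (fun n : ℕ => ∑ j ∈ Finset.range (Nat.sqrt n + 1), 1 / (j:ℝ) ^ 2)
            atTop (nhds (π ^ 2 / 6)) :=
          hp.comp ((tendsto_add_atTop_nat 1).comp hsqrt_atTop)
        have := (tendsto_const_nhds (x := π ^ 2 / 6) (f := atTop (α := ℕ))).sub hcomp
        simpa using this
      have := hb1.add hb2
      simpa using this
  have := hTlim.add hElim
  rw [add_zero] at this
  refine this.congr fun n => ?_
  simp only [hE, hA]
  ring
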